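/- arXiv:1210.2690 — 8 statements merged into one kernel-verified Lean document; each statement's English description precedes it below -/
import Mathlib

section
/- Fix integers n ≥ 2 and d ≥ 3, and let h = z_0·z_1^{d-1} + z_1·z_2^{d-1} + (z_3^d + ⋯ + z_n^d) in the polynomial ring ℂ[z_0, …, z_n] (the sum z_3^d + ⋯ + z_n^d is empty when n = 2). Then a vector v ∈ ℂ^{n+1} is a common zero of all n+1 partial derivatives ∂h/∂z_0, …, ∂h/∂z_n if and only if v_1 = v_2 = ⋯ = v_n = 0. Consequently the projective hypersurface V(h) ⊆ ℙ^n has exactly one singular point, namely (1 : 0 : ⋯ : 0). -/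
open MvPolynomial

/-- The hypersurface of Proposition 17: the common zeros of the partial derivatives of
`h = z₀ z₁^{d-1} + z₁ z₂^{d-1} + (z₃^d + ⋯ + zₙ^d)` are exactly the vectors with
`v₁ = ⋯ = vₙ = 0`, so `V(h)` has exactly one singular point `(1 : 0 : ⋯ : 0)`. -/
theorem stmt_1 (n d : ℕ) (hn : 2 ≤ n) (hd : 3 ≤ d)
    (h : MvPolynomial (Fin (n + 1)) ℂ)
    (hh : h = X 0 * X 1 ^ (d - 1) + X 1 * X 2 ^ (d - 1) +
        ∑ i ∈ Finset.univ.filter (fun i : Fin (n + 1) => 3 ≤ (i : ℕ)), X i ^ d)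
    (v : Fin (n + 1) → ℂ) :
    (∀ i : Fin (n + 1), eval v (pderiv i h) = 0) ↔
      (∀ i : Fin (n + 1), i ≠ 0 → v i = 0) := by
  subst hh
  have hn0 : n ≠ 0 := by omega
  have h1 : ((1 : Fin (n+1)) : ℕ) = 1 := by simp [Fin.val_one']; omega
  have h2 : ((2 : Fin (n+1)) : ℕ) = 2 := by
    show 2 % (n+1) = 2; exact Nat.mod_eq_of_lt (by omega)
  have m1 : 1 % (1+n) = 1 := Nat.mod_eq_of_lt (by omega)
  have m2 : 2 % (1+n) = 2 := Nat.mod_eq_of_lt (by omega)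
  have hsum : ∀ k : Fin (n+1),
      eval v (pderiv k (∑ i ∈ Finset.univ.filter (fun i : Fin (n+1) => 3 ≤ (i:ℕ)), X i ^ d))
      = if 3 ≤ (k:ℕ) then (d : ℂ) * v k ^ (d-1) else 0 := by
    intro k
    rw [map_sum, map_sum]
    rw [Finset.sum_congr rfl (g := fun i => if i = k then (d:ℂ) * v k ^ (d-1) else 0)
      (fun i _ => by
        by_cases hik : i = k
        · subst hik; rw [pderiv_pow, pderiv_X_self]; simp
        · rw [pderiv_pow, pderiv_X_of_ne hik]; simp [hik])]
    rw [Finset.sum_ite_eq' ]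
    simp
  -- evaluation formulas
  have e0 : eval v (pderiv (0 : Fin (n+1)) (X 0 * X 1 ^ (d - 1) + X 1 * X 2 ^ (d - 1) +
        ∑ i ∈ Finset.univ.filter (fun i : Fin (n + 1) => 3 ≤ (i : ℕ)), X i ^ d))
      = v 1 ^ (d-1) := by
    rw [map_add, map_add, map_add, map_add, hsum]
    simp [pderiv_mul, pderiv_pow, pderiv_X, Pi.single_apply, Fin.ext_iff, h1, h2, hn0, m1, m2,
      show 2 % (n+1) = 2 from Nat.mod_eq_of_lt (by omega)]
  have e1 : eval v (pderiv (1 : Fin (n+1)) (X 0 * X 1 ^ (d - 1) + X 1 * X 2 ^ (d - 1) +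
        ∑ i ∈ Finset.univ.filter (fun i : Fin (n + 1) => 3 ≤ (i : ℕ)), X i ^ d))
      = v 0 * ((d-1 : ℕ) * v 1 ^ (d-2)) + v 2 ^ (d-1) := by
    rw [map_add, map_add, map_add, map_add, hsum]
    simp [pderiv_mul, pderiv_pow, pderiv_X, Pi.single_apply, Fin.ext_iff, h1, h2, hn0, m1, m2]
    ring_nf
    simp [show d - 1 - 1 = d - 2 by omega, m1, m2, hn0]
  have e2 : eval v (pderiv (2 : Fin (n+1)) (X 0 * X 1 ^ (d - 1) + X 1 * X 2 ^ (d - 1) +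
        ∑ i ∈ Finset.univ.filter (fun i : Fin (n + 1) => 3 ≤ (i : ℕ)), X i ^ d))
      = v 1 * ((d-1 : ℕ) * v 2 ^ (d-2)) := by
    rw [map_add, map_add, map_add, map_add, hsum]
    simp [pderiv_mul, pderiv_pow, pderiv_X, Pi.single_apply, Fin.ext_iff, h1, h2, hn0, m1, m2]
    ring_nf
    simp [show d - 1 - 1 = d - 2 by omega, m1, m2, hn0]
  have e3 : ∀ k : Fin (n+1), 3 ≤ (k:ℕ) →
      eval v (pderiv k (X 0 * X 1 ^ (d - 1) + X 1 * X 2 ^ (d - 1) +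
        ∑ i ∈ Finset.univ.filter (fun i : Fin (n + 1) => 3 ≤ (i : ℕ)), X i ^ d))
      = (d:ℂ) * v k ^ (d-1) := by
    intro k hk
    have hk0 : k ≠ 0 := by intro hc; rw [hc] at hk; simp at hk
    have hk1 : k ≠ 1 := by intro hc; rw [hc, h1] at hk; omega
    have hk2 : k ≠ 2 := by intro hc; rw [hc] at hk; rw [h2] at hk; omega
    rw [map_add, map_add, map_add, map_add, hsum]
    rw [pderiv_mul, pderiv_mul, pderiv_pow, pderiv_pow,
      pderiv_X_of_ne (Ne.symm hk0), pderiv_X_of_ne (Ne.symm hk1), pderiv_X_of_ne (Ne.symm hk2)]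
    simp [hk]
  constructor
  · intro H i hi
    have hv1 : v 1 = 0 := by
      have := H 0; rw [e0] at this
      exact pow_eq_zero_iff (by omega) |>.mp this
    have hv2 : v 2 = 0 := by
      have := H 1; rw [e1, hv1] at this
      rw [zero_pow (by omega), mul_zero, mul_zero, zero_add] at this
      exact pow_eq_zero_iff (by omega) |>.mp this
    rcases Nat.lt_or_ge (i : ℕ) 3 with hlt | hge
    · interval_cases hi2 : (i : ℕ)
      · exact absurd (Fin.ext hi2) hi
      · rwa [show i = 1 from Fin.ext (by rw [hi2, h1])]
      · rwa [show i = 2 from Fin.ext (by rw [hi2, h2])]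
    · have := H i; rw [e3 i hge] at this
      have hd0 : (d : ℂ) ≠ 0 := Nat.cast_ne_zero.mpr (by omega)
      have := (mul_eq_zero.mp this).resolve_left hd0
      exact pow_eq_zero_iff (by omega) |>.mp this
  · intro H i
    have hv1 : v 1 = 0 := H 1 (by simp [Fin.ext_iff, h1, hn0])
    have hv2 : v 2 = 0 := H 2 (by simp [Fin.ext_iff, h2, hn0, show 2 % (n+1) = 2 from Nat.mod_eq_of_lt (by omega)])
    rcases Nat.lt_or_ge (i : ℕ) 3 with hlt | hge
    · interval_cases hi2 : (i : ℕ)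
      · rw [show i = 0 from Fin.ext hi2, e0, hv1, zero_pow (by omega)]
      · rw [show i = 1 from Fin.ext (by rw [hi2, h1]), e1, hv1, hv2,
          zero_pow (by omega), zero_pow (by omega)]; ring
      · rw [show i = 2 from Fin.ext (by rw [hi2, h2]), e2, hv1]; ring
    · have hvi : v i = 0 := H i (by intro hc; rw [hc] at hge; simp at hge)
      rw [e3 i hge, hvi, zero_pow (by omega), mul_zero]
end

section
/- Fix integers n ≥ 2 and d ≥ 3, and let f = x_1^{d-1} + x_1·x_2^{d-1} + (x_3^d + ⋯ + x_n^d) in ℂ[x_1, …, x_n] (the sum x_3^d + ⋯ + x_n^d is empty when n = 2). Then the only common zero in ℂ^n of the n partial derivatives ∂f/∂x_1, …, ∂f/∂x_n is the origin; that is, f has a unique critical point, located at the origin. -/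
open MvPolynomial

theorem keyeval (n d : ℕ) (hn : 2 ≤ n) (hd : 3 ≤ d)
    (v : Fin n → ℂ) (i : Fin n) :
    eval v (pderiv i (X (⟨0, Nat.lt_of_lt_of_le (by decide) hn⟩ : Fin n) ^ (d - 1) +
        X (⟨0, Nat.lt_of_lt_of_le (by decide) hn⟩ : Fin n) * X (⟨1, Nat.lt_of_lt_of_le (by decide) hn⟩ : Fin n) ^ (d - 1) +
        ∑ j ∈ Finset.univ.filter (fun j : Fin n => 2 ≤ (j : ℕ)), X j ^ d)) =
      (if i = ⟨0, Nat.lt_of_lt_of_le (by decide) hn⟩ then (d-1 : ℕ) * v ⟨0, Nat.lt_of_lt_of_le (by decide) hn⟩ ^ (d-2) + v ⟨1, Nat.lt_of_lt_of_le (by decide) hn⟩ ^ (d-1)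
       else 0) +
      (if i = ⟨1, Nat.lt_of_lt_of_le (by decide) hn⟩ then (d-1 : ℕ) * v ⟨0, Nat.lt_of_lt_of_le (by decide) hn⟩ * v ⟨1, Nat.lt_of_lt_of_le (by decide) hn⟩ ^ (d-2) else 0) +
      (if 2 ≤ (i:ℕ) then (d:ℕ) * v i ^ (d-1) else 0) := by
  simp only [map_add, pderiv_pow, Derivation.leibniz, pderiv_X, smul_eq_mul, map_sum,
    map_mul, map_pow, map_natCast, eval_X, eval_add, eval_mul, eval_pow, apply_ite,
    map_one, map_zero, mul_ite, mul_one, mul_zero, Pi.single_apply,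
    Finset.sum_ite_eq', Finset.mem_filter, Finset.mem_univ, true_and]
  have : d - 1 - 1 = d - 2 := by omega
  rw [this]
  split_ifs with h1 h2 h3 h2 h3 h3 h3 <;>
    first
      | (exfalso; omega)
      | (first | (exfalso; revert h1 h2 h3; simp [Fin.ext_iff]; omega) | skip; ring_nf)

/-- The local equation `f = x₁^{d-1} + x₁ x₂^{d-1} + (x₃^d + ⋯ + xₙ^d)` has a unique
critical point, located at the origin.  (Variable `xᵢ` is `X ⟨i-1, _⟩`.) -/
theorem stmt_2 (n d : ℕ) (hn : 2 ≤ n) (hd : 3 ≤ d)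
    (f : MvPolynomial (Fin n) ℂ)
    (hf : f = X (⟨0, by omega⟩ : Fin n) ^ (d - 1) +
        X (⟨0, by omega⟩ : Fin n) * X (⟨1, by omega⟩ : Fin n) ^ (d - 1) +
        ∑ i ∈ Finset.univ.filter (fun i : Fin n => 2 ≤ (i : ℕ)), X i ^ d)
    (v : Fin n → ℂ) :
    (∀ i : Fin n, eval v (pderiv i f) = 0) ↔ v = 0 := by
  subst hf
  have hd1 : ((d : ℕ) - 1 : ℕ) ≠ 0 := by omega
  have hd2 : ((d : ℕ) - 2 : ℕ) ≠ 0 := by omega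
  have hdc : ((d : ℂ)) ≠ 0 := by exact_mod_cast (by omega : d ≠ 0)
  have hd1c : (((d - 1 : ℕ) : ℂ)) ≠ 0 := by exact_mod_cast hd1
  constructor
  · intro h
    set i0 : Fin n := ⟨0, by omega⟩
    set i1 : Fin n := ⟨1, by omega⟩
    have e0 := h i0
    have e1 := h i1
    rw [keyeval n d hn hd] at e0 e1
    have hne : i0 ≠ i1 := by simp [i0, i1, Fin.ext_iff]
    have r0 : (⟨0, by omega⟩ : Fin n) = i0 := rfl
    have r1 : (⟨1, by omega⟩ : Fin n) = i1 := rfl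
    simp only [r0, r1, if_pos rfl, if_true, show ¬ (2 ≤ (i0:ℕ)) by simp [i0],
      show ¬ (2 ≤ (i1:ℕ)) by simp [i1], if_neg hne, if_neg hne.symm, Fin.val_mk,
      show ¬ (2 ≤ (0:ℕ)) by omega, show ¬ (2 ≤ (1:ℕ)) by omega, if_neg, if_false,
      add_zero, zero_add] at e0 e1
    have hab : v i0 = 0 ∧ v i1 = 0 := by
      rcases mul_eq_zero.1 e1 with h' | hb
      · rcases mul_eq_zero.1 h' with h'' | ha
        · exact absurd h'' hd1c
        · have hb : v i1 = 0 := by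
            have : v i1 ^ (d - 1) = 0 := by
              rw [ha] at e0; simpa [zero_pow hd2] using e0
            exact pow_eq_zero_iff hd1 |>.1 this
          exact ⟨ha, hb⟩
      · have hb : v i1 = 0 := pow_eq_zero_iff hd2 |>.1 hb
        have ha : v i0 = 0 := by
          have : (↑(d-1) : ℂ) * v i0 ^ (d - 2) = 0 := by
            rw [hb] at e0; simpa [zero_pow hd1] using e0
          rcases mul_eq_zero.1 this with h'' | h''
          · exact absurd h'' hd1c
          · exact pow_eq_zero_iff hd2 |>.1 h''
        exact ⟨ha, hb⟩
    funext i
    by_cases hi : 2 ≤ (i : ℕ)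
    · have ei := h i
      rw [keyeval n d hn hd] at ei
      have hne0 : i ≠ i0 := by simp [i0, Fin.ext_iff]; omega
      have hne1 : i ≠ i1 := by simp [i1, Fin.ext_iff]; omega
      simp only [r0, r1, if_neg hne0, if_neg hne1, if_pos hi, zero_add] at ei
      rcases mul_eq_zero.1 ei with h' | h'
      · exact absurd h' hdc
      · simpa using pow_eq_zero_iff hd1 |>.1 h'
    · have : i = i0 ∨ i = i1 := by
        have h2 : (i:ℕ) = 0 ∨ (i:ℕ) = 1 := by omega
        rcases h2 with h' | h'
        · left; exact Fin.ext h'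
        · right; exact Fin.ext h'
      rcases this with rfl | rfl
      · simpa using hab.1
      · simpa using hab.2
  · intro hv i
    subst hv
    rw [keyeval n d hn hd]
    simp [zero_pow hd1, zero_pow hd2]
end

section
/- Fix integers n ≥ 3 and d ≥ 3, and nonzero complex numbers c_2, …, c_{n-1}. Let g_0 = x_1^{d-1} + (x_3^d + ⋯ + x_{n-1}^d) + (c_2·x_2 + ⋯ + c_{n-1}·x_{n-1})^d in ℂ[x_1, …, x_{n-1}] (the sum x_3^d + ⋯ + x_{n-1}^d is empty when n = 3). Then the only common zero in ℂ^{n-1} of the partial derivatives ∂g_0/∂x_1, …, ∂g_0/∂x_{n-1} is the origin; that is, g_0 has a unique critical point, located at the origin. -/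
open MvPolynomial

lemma stmt_4_key (n d : ℕ) (hn : 3 ≤ n)
    (c : Fin (n - 1) → ℂ)
    (v : Fin (n - 1) → ℂ) (j : Fin (n - 1)) :
    eval v (pderiv j (X (⟨0, by omega⟩ : Fin (n - 1)) ^ (d - 1) +
        ∑ i ∈ Finset.univ.filter (fun i : Fin (n - 1) => 2 ≤ (i : ℕ)), X i ^ d +
        (∑ i ∈ Finset.univ.filter (fun i : Fin (n - 1) => 1 ≤ (i : ℕ)), C (c i) * X i) ^ d))
    = (if (j : ℕ) = 0 then ((d - 1 : ℕ) : ℂ) * v j ^ (d - 2) else 0)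
      + (if 2 ≤ (j : ℕ) then (d : ℂ) * v j ^ (d - 1) else 0)
      + (if 1 ≤ (j : ℕ) then
          (d : ℂ) * (∑ i ∈ Finset.univ.filter (fun i : Fin (n - 1) => 1 ≤ (i : ℕ)),
            c i * v i) ^ (d - 1) * c j else 0) := by
  have h0 : ((⟨0, by omega⟩ : Fin (n - 1)) = j) ↔ ((j : ℕ) = 0) := by
    simp [Fin.ext_iff, eq_comm]
  simp only [map_add, pderiv_pow, map_sum, pderiv_C_mul, pderiv_X, map_mul, map_pow,
    map_natCast, eval_X, eval_C, Pi.single_apply, apply_ite, map_one, map_zero,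
    mul_ite, mul_one, mul_zero, Finset.sum_ite_eq', Finset.mem_filter, Finset.mem_univ,
    true_and, h0, show d - 1 - 1 = d - 2 from by omega]
  split_ifs <;> try omega
  all_goals try rw [show v (⟨0, by omega⟩ : Fin (n - 1)) = v j from by
    congr 1; exact Fin.ext (by simp_all)]
  all_goals ring

/-- The principal part `g₀ = x₁^{d-1} + (x₃^d + ⋯ + x_{n-1}^d) + (c₂x₂ + ⋯ + c_{n-1}x_{n-1})^d`
has a unique critical point, located at the origin.  (Variable `xᵢ` is `X ⟨i-1, _⟩` of
`MvPolynomial (Fin (n-1)) ℂ`, and `c` at index `i` is `c_{i+1}`.) -/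
theorem stmt_4 (n d : ℕ) (hn : 3 ≤ n) (hd : 3 ≤ d)
    (c : Fin (n - 1) → ℂ) (hc : ∀ i : Fin (n - 1), 1 ≤ (i : ℕ) → c i ≠ 0)
    (g₀ : MvPolynomial (Fin (n - 1)) ℂ)
    (hg : g₀ = X (⟨0, by omega⟩ : Fin (n - 1)) ^ (d - 1) +
        ∑ i ∈ Finset.univ.filter (fun i : Fin (n - 1) => 2 ≤ (i : ℕ)), X i ^ d +
        (∑ i ∈ Finset.univ.filter (fun i : Fin (n - 1) => 1 ≤ (i : ℕ)), C (c i) * X i) ^ d)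
    (v : Fin (n - 1) → ℂ) :
    (∀ i : Fin (n - 1), eval v (pderiv i g₀) = 0) ↔ v = 0 := by
  subst hg
  have hd2 : d - 2 ≠ 0 := by omega
  have hd1 : d - 1 ≠ 0 := by omega
  have hdC : (d : ℂ) ≠ 0 := Nat.cast_ne_zero.mpr (by omega)
  have hdm1C : ((d - 1 : ℕ) : ℂ) ≠ 0 := Nat.cast_ne_zero.mpr (by omega)
  constructor
  · intro h
    set L : ℂ := ∑ i ∈ Finset.univ.filter (fun i : Fin (n - 1) => 1 ≤ (i : ℕ)), c i * v i
      with hLdef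
    -- From the partial at index 1:  L = 0
    have hL : L = 0 := by
      have h1 := h ⟨1, by omega⟩
      rw [stmt_4_key n d hn] at h1
      simp only [show ((⟨1, by omega⟩ : Fin (n - 1)) : ℕ) = 1 from rfl] at h1
      norm_num at h1
      rcases h1 with (h1 | h1) | h1
      · omega
      · exact h1.1
      · exact absurd h1 (hc ⟨1, by omega⟩ (by norm_num))
    -- From the partial at index 0:  v₀ = 0
    have h0 : v ⟨0, by omega⟩ = 0 := by
      have h0 := h ⟨0, by omega⟩
      rw [stmt_4_key n d hn] at h0
      simp only [show ((⟨0, by omega⟩ : Fin (n - 1)) : ℕ) = 0 from rfl] at h0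
      norm_num at h0
      rcases h0 with h0 | h0
      · omega
      · exact h0.1
    -- For indices ≥ 2:  vⱼ = 0
    have h2 : ∀ j : Fin (n - 1), 2 ≤ (j : ℕ) → v j = 0 := by
      intro j hj
      have hj' := h j
      rw [stmt_4_key n d hn] at hj'
      rw [if_neg (by omega), if_pos hj, if_pos (by omega), ← hLdef, hL,
        zero_pow hd1] at hj'
      simp only [zero_add, mul_zero, zero_mul, add_zero] at hj'
      rcases mul_eq_zero.mp hj' with h' | h'
      · exact absurd h' hdC
      · exact pow_eq_zero_iff hd1 |>.mp h'
    -- Index 1:  v₁ = 0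
    have h1 : v ⟨1, by omega⟩ = 0 := by
      have hsum : L = c ⟨1, by omega⟩ * v ⟨1, by omega⟩ := by
        rw [hLdef]
        refine Finset.sum_eq_single_of_mem _ (by simp) ?_
        intro b hb hne
        have hb1 : 1 ≤ (b : ℕ) := (Finset.mem_filter.mp hb).2
        have : 2 ≤ (b : ℕ) := by
          rcases Nat.lt_or_ge (b : ℕ) 2 with h' | h'
          · exact absurd (Fin.ext (show (b : ℕ) = 1 by omega)) hne
          · exact h'
        rw [h2 b this, mul_zero]
      rw [hL] at hsum
      rcases mul_eq_zero.mp hsum.symm with h' | h'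
      · exact absurd h' (hc ⟨1, by omega⟩ (by norm_num))
      · exact h'
    funext j
    show v j = 0
    by_cases hj0 : (j : ℕ) = 0
    · rw [show j = (⟨0, by omega⟩ : Fin (n - 1)) from Fin.ext (by simp [hj0])]
      exact h0
    by_cases hj1 : (j : ℕ) = 1
    · rw [show j = (⟨1, by omega⟩ : Fin (n - 1)) from Fin.ext (by simp [hj1])]
      exact h1
    · exact h2 j (by omega)
  · rintro rfl
    intro i
    rw [stmt_4_key n d hn]
    simp [zero_pow hd1, zero_pow hd2]
end

section
/- Fix an integer d ≥ 3 and let h = z_3^{d-1}·z_0 + z_3^{d-2}·z_4·z_1 + z_4^{d-1}·z_2 in ℂ[z_0, z_1, z_2, z_3, z_4]. Then the Hessian determinant of h vanishes identically: the determinant of the 5×5 matrix whose (i,j) entry is the second partial derivative ∂²h/∂z_i∂z_j is the zero polynomial. -/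
open MvPolynomial

lemma det5_zero {R : Type*} [CommRing R] (M : Matrix (Fin 5) (Fin 5) R)
    (h : ∀ i j : Fin 5, i ≤ 2 → j ≤ 2 → M i j = 0) : M.det = 0 := by
  have e : M = !![0,0,0,M 0 3, M 0 4; 0,0,0,M 1 3, M 1 4; 0,0,0,M 2 3, M 2 4;
      M 3 0, M 3 1, M 3 2, M 3 3, M 3 4; M 4 0, M 4 1, M 4 2, M 4 3, M 4 4] := by
    funext i j
    fin_cases i <;> fin_cases j <;>
      first
        | rfl
        | (exact h _ _ (by decide) (by decide))
  rw [e]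
  simp [Matrix.det_succ_row_zero, Fin.sum_univ_succ, Fin.succAbove]

/-- The Hessian determinant of the Gordan–Noether polynomial
`h = z₃^{d-1} z₀ + z₃^{d-2} z₄ z₁ + z₄^{d-1} z₂` vanishes identically. -/
theorem stmt_6 (d : ℕ) (hd : 3 ≤ d)
    (h : MvPolynomial (Fin 5) ℂ)
    (hh : h = X 3 ^ (d - 1) * X 0 + X 3 ^ (d - 2) * X 4 * X 1 + X 4 ^ (d - 1) * X 2) :
    Matrix.det (Matrix.of fun i j : Fin 5 => pderiv i (pderiv j h)) = 0 := by
  have e0 : pderiv (0:Fin 5) h = X 3 ^ (d-1) := by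
    subst hh; simp [pderiv_mul, pderiv_pow, Pi.single_apply]
  have e1 : pderiv (1:Fin 5) h = X 3 ^ (d-2) * X 4 := by
    subst hh; simp [pderiv_mul, pderiv_pow, Pi.single_apply]
  have e2 : pderiv (2:Fin 5) h = X 4 ^ (d-1) := by
    subst hh; simp [pderiv_mul, pderiv_pow, Pi.single_apply]
  apply det5_zero
  intro i j hi hj
  simp only [Matrix.of_apply]
  have hi3 : i = 0 ∨ i = 1 ∨ i = 2 := by
    fin_cases i <;>
      first
        | (left; rfl) | (right; left; rfl) | (right; right; rfl)
        | (exact absurd hi (by decide))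
  have hj3 : j = 0 ∨ j = 1 ∨ j = 2 := by
    fin_cases j <;>
      first
        | (left; rfl) | (right; left; rfl) | (right; right; rfl)
        | (exact absurd hj (by decide))
  rcases hj3 with rfl | rfl | rfl
  · rw [e0]; rcases hi3 with rfl | rfl | rfl <;> simp [pderiv_pow, Pi.single_apply]
  · rw [e1]; rcases hi3 with rfl | rfl | rfl <;> simp [pderiv_mul, pderiv_pow, Pi.single_apply]
  · rw [e2]; rcases hi3 with rfl | rfl | rfl <;> simp [pderiv_pow, Pi.single_apply]
end

section
/- Fix an integer d ≥ 3 and let h = z_3^{d-1}·z_0 + z_3^{d-2}·z_4·z_1 + z_4^{d-1}·z_2 in ℂ[z_0, z_1, z_2, z_3, z_4]. Then the five partial derivatives ∂h/∂z_0, …, ∂h/∂z_4 are linearly independent over ℂ: if a_0, …, a_4 ∈ ℂ satisfy a_0·∂h/∂z_0 + ⋯ + a_4·∂h/∂z_4 = 0 as a polynomial, then a_0 = ⋯ = a_4 = 0. -/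
open MvPolynomial

/-- The partial derivatives of the Gordan–Noether polynomial
`h = z₃^{d-1} z₀ + z₃^{d-2} z₄ z₁ + z₄^{d-1} z₂` are linearly independent over `ℂ`,
i.e. `V(h)` is not a cone. -/
theorem stmt_7 (d : ℕ) (hd : 3 ≤ d)
    (h : MvPolynomial (Fin 5) ℂ)
    (hh : h = X 3 ^ (d - 1) * X 0 + X 3 ^ (d - 2) * X 4 * X 1 + X 4 ^ (d - 1) * X 2)
    (a : Fin 5 → ℂ) (ha : ∑ i : Fin 5, C (a i) * pderiv i h = 0) :
    a = 0 := by
  subst hh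
  rw [Fin.sum_univ_five] at ha
  have e : ∀ i j : Fin 5, i ≠ j → ((i = j) = False) := by decide
  simp only [map_add, pderiv_mul, pderiv_pow, pderiv_X, Pi.single_apply,
    e 0 1 (by decide), e 0 2 (by decide), e 0 3 (by decide), e 0 4 (by decide),
    e 1 0 (by decide), e 1 2 (by decide), e 1 3 (by decide), e 1 4 (by decide),
    e 2 0 (by decide), e 2 1 (by decide), e 2 3 (by decide), e 2 4 (by decide),
    e 3 0 (by decide), e 3 1 (by decide), e 3 2 (by decide), e 3 4 (by decide),
    e 4 0 (by decide), e 4 1 (by decide), e 4 2 (by decide), e 4 3 (by decide),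
    if_true, if_false, eq_self_iff_true, add_zero, zero_add, mul_one, mul_zero, zero_mul] at ha
  have hd1 : d - 1 ≠ 0 := by omega
  have hd2 : d - 2 ≠ 0 := by omega
  have hcast : ((d - 1 : ℕ) : ℂ) ≠ 0 := Nat.cast_ne_zero.mpr hd1
  have h1 := congrArg (eval ![0,0,0,1,0]) ha
  have h2 := congrArg (eval ![0,0,0,0,1]) ha
  have h3 := congrArg (eval ![0,0,0,1,1]) ha
  have h4 := congrArg (eval ![1,0,0,1,0]) ha
  have h5 := congrArg (eval ![0,0,1,0,1]) ha
  simp [zero_pow, hd1, hd2] at h1 h2 h3 h4 h5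
  have ha1 : a 1 = 0 := by rw [h1, h2] at h3; simpa using h3
  have ha3 : a 3 = 0 := by
    rw [h1, zero_add] at h4
    exact (mul_eq_zero.mp h4).resolve_right hcast
  have ha4 : a 4 = 0 := by
    rw [h2, zero_add] at h5
    exact (mul_eq_zero.mp h5).resolve_right hcast
  funext i
  fin_cases i <;> simp [h1, ha1, h2, ha3, ha4]
end

section
/- Fix integers n ≥ 2 and d ≥ 2, and define homogeneous polynomials h_0, …, h_n of degree d−1 in ℂ[z_0, …, z_n] by h_n = z_0^{d-1}, h_{n-1} = 2·z_0^{d-2}·z_1, and h_{n-i} = 2·z_0^{d-2}·z_i + z_{i-1}^{d-1} for i = 2, …, n. Suppose v, w ∈ ℂ^{n+1} satisfy v_0 ≠ 0 and w_0 ≠ 0, and there exists a nonzero λ ∈ ℂ with h_j(v) = λ·h_j(w) for every j = 0, …, n. Then there exists a nonzero μ ∈ ℂ with v = μ·w. -/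
open MvPolynomial

/-- Example 18: the rational map `z ↦ (h₀ : ⋯ : hₙ)` is injective on `{z₀ ≠ 0}`,
where `hₙ = z₀^{d-1}`, `h_{n-1} = 2 z₀^{d-2} z₁`,
`h_{n-i} = 2 z₀^{d-2} zᵢ + z_{i-1}^{d-1}` for `i = 2, …, n`. -/
theorem stmt_10 (n d : ℕ) (hn : 2 ≤ n) (hd : 2 ≤ d)
    (H : ℕ → MvPolynomial (Fin (n + 1)) ℂ)
    (hHn : H n = X 0 ^ (d - 1))
    (hHn1 : H (n - 1) = 2 * X 0 ^ (d - 2) * X 1)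
    (hHi : ∀ i, 2 ≤ i → ∀ hi : i ≤ n,
      H (n - i) = 2 * X 0 ^ (d - 2) * X (⟨i, by omega⟩ : Fin (n + 1)) +
        X (⟨i - 1, by omega⟩ : Fin (n + 1)) ^ (d - 1))
    (v w : Fin (n + 1) → ℂ) (hv0 : v 0 ≠ 0) (hw0 : w 0 ≠ 0)
    (lam : ℂ) (hlam : lam ≠ 0)
    (heq : ∀ j, j ≤ n → eval v (H j) = lam * eval w (H j)) :
    ∃ μ : ℂ, μ ≠ 0 ∧ v = μ • w := by
  have hd1 : d - 1 = (d - 2) + 1 := by omega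
  set μ := v 0 / w 0 with hμ
  have hμ0 : μ ≠ 0 := div_ne_zero hv0 hw0
  have hμw : μ * w 0 = v 0 := by rw [hμ]; field_simp
  have hn' := heq n le_rfl
  rw [hHn] at hn'
  simp only [eval_pow, eval_X] at hn'
  have hlamμ : lam = μ ^ (d - 1) := by
    rw [hμ, div_pow, eq_div_iff (pow_ne_zero _ hw0)]
    linear_combination -hn'
  have hkey : μ ^ (d - 1) * w 0 ^ (d - 2) = μ * v 0 ^ (d - 2) := by
    rw [← hμw, mul_pow, hd1, pow_succ]; ring
  have claim : ∀ i, ∀ h : i < n + 1, v ⟨i, h⟩ = μ * w ⟨i, h⟩ := by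
    intro i
    induction i with
    | zero =>
      intro h
      exact hμw.symm
    | succ i ih =>
      intro h
      match i, ih with
      | 0, _ =>
        have h1 : (⟨1, h⟩ : Fin (n + 1)) = 1 := by
          ext; rw [Fin.val_one', Nat.mod_eq_of_lt (by omega)]
        rw [h1]
        have he := heq (n - 1) (by omega)
        rw [hHn1] at he
        simp only [eval_mul, eval_pow, eval_X, eval_ofNat] at he
        rw [hlamμ] at he
        have h2 : (2 : ℂ) * v 0 ^ (d - 2) ≠ 0 :=
          mul_ne_zero two_ne_zero (pow_ne_zero _ hv0)
        apply mul_left_cancel₀ h2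
        linear_combination he + 2 * w 1 * hkey
      | i + 1, ih =>
        have he := heq (n - (i + 2)) (by omega)
        rw [hHi (i + 2) (by omega) (by omega)] at he
        simp only [eval_add, eval_mul, eval_pow, eval_X, eval_ofNat,
          Nat.succ_sub_one] at he
        rw [hlamμ] at he
        have hvi : v ⟨i + 1, by omega⟩ ^ (d - 1)
            = μ ^ (d - 1) * w ⟨i + 1, by omega⟩ ^ (d - 1) := by
          rw [ih (by omega), mul_pow]
        have h2 : (2 : ℂ) * v 0 ^ (d - 2) ≠ 0 :=
          mul_ne_zero two_ne_zero (pow_ne_zero _ hv0)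
        apply mul_left_cancel₀ h2
        linear_combination he - hvi + 2 * w ⟨i + 2, h⟩ * hkey
  refine ⟨μ, hμ0, ?_⟩
  funext j
  obtain ⟨j, hj⟩ := j
  rw [Pi.smul_apply, smul_eq_mul]
  exact claim j hj
end

section
/- Let h = z_0·(z_1² + z_0·z_2) = z_0·z_1² + z_0²·z_2 in ℂ[z_0, z_1, z_2], with gradient (∂h/∂z_0, ∂h/∂z_1, ∂h/∂z_2) = (z_1² + 2·z_0·z_2, 2·z_0·z_1, z_0²). Then for every (a, b, c) ∈ ℂ³ with c ≠ 0, there is exactly one point of ℙ², i.e. exactly one nonzero vector v ∈ ℂ³ up to nonzero scalar multiple, for which there exists a nonzero t ∈ ℂ with (∂h/∂z_0)(v) = t·a, (∂h/∂z_1)(v) = t·b, and (∂h/∂z_2)(v) = t·c. -/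
open MvPolynomial

/-- `v` is a preimage, up to scalar, of the point `(a : b : c)` under the gradient map
of `h`, witnessed by a nonzero scalar `t`. -/
def IsGradPreimage (h : MvPolynomial (Fin 3) ℂ) (a b c : ℂ) (v : Fin 3 → ℂ) : Prop :=
  v ≠ 0 ∧ ∃ t : ℂ, t ≠ 0 ∧
    eval v (pderiv 0 h) = t * a ∧ eval v (pderiv 1 h) = t * b ∧ eval v (pderiv 2 h) = t * c

/-- The gradient map of the homaloidal curve `h = z₀(z₁² + z₀z₂)` has exactly one
preimage in `ℙ²` over every point `(a : b : c)` with `c ≠ 0`. -/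
theorem stmt_12 (h : MvPolynomial (Fin 3) ℂ)
    (hh : h = X 0 * X 1 ^ 2 + X 0 ^ 2 * X 2)
    (a b c : ℂ) (hc : c ≠ 0) :
    ∃ v : Fin 3 → ℂ, IsGradPreimage h a b c v ∧
      ∀ w : Fin 3 → ℂ, IsGradPreimage h a b c w → ∃ μ : ℂ, μ ≠ 0 ∧ w = μ • v := by
  subst hh
  have hd0 : ∀ w : Fin 3 → ℂ,
      eval w (pderiv 0 ((X 0 * X 1 ^ 2 + X 0 ^ 2 * X 2 : MvPolynomial (Fin 3) ℂ)))
        = w 1 ^ 2 + 2 * w 0 * w 2 := by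
    intro w; simp [pderiv_mul, pderiv_pow]; ring
  have hd1 : ∀ w : Fin 3 → ℂ,
      eval w (pderiv 1 ((X 0 * X 1 ^ 2 + X 0 ^ 2 * X 2 : MvPolynomial (Fin 3) ℂ)))
        = 2 * w 0 * w 1 := by
    intro w; simp [pderiv_mul, pderiv_pow]; ring
  have hd2 : ∀ w : Fin 3 → ℂ,
      eval w (pderiv 2 ((X 0 * X 1 ^ 2 + X 0 ^ 2 * X 2 : MvPolynomial (Fin 3) ℂ)))
        = w 0 ^ 2 := by
    intro w; simp [pderiv_mul, pderiv_pow]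
  set v : Fin 3 → ℂ := ![1, b / (2 * c), (4 * a * c - b ^ 2) / (8 * c ^ 2)] with hv
  refine ⟨v, ⟨?_, 1 / c, one_div_ne_zero hc, ?_, ?_, ?_⟩, ?_⟩
  · intro h0
    have : v 0 = 0 := by rw [h0]; rfl
    simp [hv] at this
  · rw [hd0]; show (b / (2 * c)) ^ 2 + 2 * 1 * ((4 * a * c - b ^ 2) / (8 * c ^ 2)) = 1 / c * a
    field_simp; ring
  · rw [hd1]; show 2 * 1 * (b / (2 * c)) = 1 / c * b
    field_simp
  · rw [hd2]; show (1 : ℂ) ^ 2 = 1 / c * c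
    field_simp
  · rintro w ⟨-, t, ht, e0, e1, e2⟩
    rw [hd0] at e0; rw [hd1] at e1; rw [hd2] at e2
    have hw0 : w 0 ≠ 0 := by
      intro h0
      rw [h0] at e2
      simp at e2
      exact hc (by simpa [ht] using e2.symm)
    have htc : t = w 0 ^ 2 / c := by field_simp [e2]; exact e2.symm
    rw [htc] at e0 e1
    have hw1 : w 1 = w 0 * b / (2 * c) := by
      field_simp at e1 ⊢
      exact mul_left_cancel₀ hw0 (by linear_combination w 0 * e1)
    have hw2 : w 2 = w 0 * (4 * a * c - b ^ 2) / (8 * c ^ 2) := by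
      rw [hw1] at e0
      field_simp at e0
      rw [eq_div_iff (by simp [hc] : (8 : ℂ) * c ^ 2 ≠ 0)]
      refine mul_left_cancel₀ hc (mul_left_cancel₀ hw0 ?_)
      linear_combination w 0 * c * e0
    refine ⟨w 0, hw0, ?_⟩
    funext i
    fin_cases i
    · simp [hv]
    · show w 1 = w 0 * (b / (2 * c))
      rw [hw1]; ring
    · show w 2 = w 0 * ((4 * a * c - b ^ 2) / (8 * c ^ 2))
      rw [hw2]; ring
end

section
/- Let h = z_1³ + z_0²·z_2 in ℂ[z_0, z_1, z_2], with gradient (∂h/∂z_0, ∂h/∂z_1, ∂h/∂z_2) = (2·z_0·z_2, 3·z_1², z_0²). Then for every (a, b, c) ∈ ℂ³ with b ≠ 0 and c ≠ 0, there are exactly two points of ℙ², i.e. exactly two nonzero vectors v ∈ ℂ³ up to nonzero scalar multiple, for which there exists a nonzero t ∈ ℂ with (∂h/∂z_0)(v) = t·a, (∂h/∂z_1)(v) = t·b, and (∂h/∂z_2)(v) = t·c. -/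
open MvPolynomial

lemma grad_eval (v : Fin 3 → ℂ) :
    eval v (pderiv 0 ((X 1 ^ 3 + X 0 ^ 2 * X 2 : MvPolynomial (Fin 3) ℂ))) = 2 * v 0 * v 2 ∧
    eval v (pderiv 1 ((X 1 ^ 3 + X 0 ^ 2 * X 2 : MvPolynomial (Fin 3) ℂ))) = 3 * v 1 ^ 2 ∧
    eval v (pderiv 2 ((X 1 ^ 3 + X 0 ^ 2 * X 2 : MvPolynomial (Fin 3) ℂ))) = v 0 ^ 2 := by
  refine ⟨?_, ?_, ?_⟩ <;> simp [pderiv_X, Pi.single_apply] <;> try ring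

/-- The gradient map of the cuspidal cubic `h = z₁³ + z₀²z₂` has exactly two
preimages in `ℙ²` over every point `(a : b : c)` with `b ≠ 0` and `c ≠ 0`. -/
theorem stmt_13 (h : MvPolynomial (Fin 3) ℂ)
    (hh : h = X 1 ^ 3 + X 0 ^ 2 * X 2)
    (a b c : ℂ) (hb : b ≠ 0) (hc : c ≠ 0) :
    ∃ v₁ v₂ : Fin 3 → ℂ, IsGradPreimage h a b c v₁ ∧ IsGradPreimage h a b c v₂ ∧
      (¬ ∃ μ : ℂ, μ ≠ 0 ∧ v₂ = μ • v₁) ∧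
      ∀ w : Fin 3 → ℂ, IsGradPreimage h a b c w →
        (∃ μ : ℂ, μ ≠ 0 ∧ w = μ • v₁) ∨ (∃ μ : ℂ, μ ≠ 0 ∧ w = μ • v₂) := by
  subst hh
  obtain ⟨s, hs⟩ := IsAlgClosed.exists_pow_nat_eq (k := ℂ) (b / (3 * c)) zero_lt_two
  have hs0 : s ≠ 0 := by
    intro h0
    apply hb
    rw [h0] at hs
    field_simp at hs
    simpa using hs.symm
  set u := a / (2 * c) with hu
  have key : ∀ s' : ℂ, s' ^ 2 = b / (3 * c) → IsGradPreimage (X 1 ^ 3 + X 0 ^ 2 * X 2) a b c ![1, s', u] := by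
    intro s' hs'
    refine ⟨?_, 1/c, one_div_ne_zero hc, ?_, ?_, ?_⟩
    · intro h0; have := congrFun h0 0; simp at this
    · rw [(grad_eval _).1]; show 2 * 1 * u = 1/c * a; rw [hu]; field_simp
    · rw [(grad_eval _).2.1]; show 3 * s' ^ 2 = 1/c * b; rw [hs']; field_simp
    · rw [(grad_eval _).2.2]; show (1:ℂ) ^ 2 = 1/c * c; field_simp
  have hsneg : (-s) ^ 2 = b / (3 * c) := by rw [neg_pow]; simp [hs]
  refine ⟨![1, s, u], ![1, -s, u], key s hs, key (-s) hsneg, ?_, ?_⟩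
  · rintro ⟨μ, hμ, heq⟩
    have h0 := congrFun heq 0
    have h1 := congrFun heq 1
    simp [Matrix.cons_val_zero, Matrix.cons_val_one] at h0 h1
    rw [← h0] at h1
    simp at h1
    exact hs0 (by linear_combination (-1/2 : ℂ) * h1)
  · rintro w ⟨hw0, t, ht, e0, e1, e2⟩
    rw [(grad_eval _).1] at e0
    rw [(grad_eval _).2.1] at e1
    rw [(grad_eval _).2.2] at e2
    have hw00 : w 0 ≠ 0 := by
      intro h0
      exact (mul_ne_zero ht hc) (by rw [← e2, h0]; ring)
    -- w 2 = w 0 * u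
    have hw2 : w 2 = w 0 * u := by
      rw [hu]
      have key2 := mul_left_cancel₀ hw00 (show w 0 * (w 2 * (2 * c)) = w 0 * (a * w 0) by
        linear_combination c * e0 - a * e2)
      field_simp
      linear_combination key2
    -- w 1 = ± w 0 * s
    have hw1 : (w 1 - w 0 * s) * (w 1 + w 0 * s) = 0 := by
      have : w 1 ^ 2 = (w 0 * s) ^ 2 := by
        have h3 : (3:ℂ) ≠ 0 := by norm_num
        rw [mul_pow, hs]; field_simp
        linear_combination c * e1 - b * e2
      linear_combination this
    rcases mul_eq_zero.mp hw1 with h1 | h1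
    · left
      refine ⟨w 0, hw00, funext fun i => ?_⟩
      fin_cases i
      · simp
      · simp; linear_combination h1
      · simpa using hw2
    · right
      refine ⟨w 0, hw00, funext fun i => ?_⟩
      fin_cases i
      · simp
      · simp; linear_combination h1
      · simpa using hw2
end
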